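/- In the hypercube Q(n) with n ≥ 4, the union of the cyclic shifts σ^ℓ(D(n,1)) for ℓ = 0, 1, ..., n-1 forms a cycle of length 2n in the subgraph induced by levels 1 and 2 that visits all n vertices in level 1, where D(n,1) = (a(n,1), a(n,2), b(n,1)), a(n,k) is the bitstring of length n with k ones in the last k positions, b(n,k) = a(n-1,k)∘0, and σ^ℓ cyclically shifts a bitstring left by ℓ positions. -/

import Mathlib

open SimpleGraph

/-- The bipartite Kneser graph `H(n,k)`: vertices are the `k`-element and
`(n-k)`-element subsets of `[n]`, with an edge when one is a (proper) subset of the other. -/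
def bipKneser (n k : ℕ) : SimpleGraph {s : Finset (Fin n) // s.card = k ∨ s.card = n - k} where
  Adj s t := s.1 ⊂ t.1 ∨ t.1 ⊂ s.1
  symm := ⟨by intro s t h; tauto⟩
  loopless := ⟨by intro s h; rcases h with h | h <;> exact ssubset_irrefl _ h⟩

/-- The Kneser graph `K(n,k)`: vertices are the `k`-element subsets of `[n]`,
with an edge between any two disjoint sets. -/
def kneser (n k : ℕ) : SimpleGraph {s : Finset (Fin n) // s.card = k} where
  Adj s t := s ≠ t ∧ Disjoint s.1 t.1
  symm := ⟨by intro s t h; exact ⟨h.1.symm, h.2.symm⟩⟩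
  loopless := ⟨by intro s h; exact h.1 rfl⟩

/-- The hypercube `Q(n)`: vertices are bitstrings of length `n`, with an edge
between two bitstrings differing in exactly one bit. -/
def hypercube (n : ℕ) : SimpleGraph (Fin n → Bool) where
  Adj x y := hammingDist x y = 1
  symm := ⟨by intro x y h; rwa [hammingDist_comm]⟩
  loopless := ⟨by intro x h; simp [hammingDist_self] at h⟩

/-- The level of a bitstring: its number of `1`-entries. -/
def level {n : ℕ} (x : Fin n → Bool) : ℕ := (Finset.univ.filter (fun i => x i = true)).card

/-- The subset of `[n]` whose characteristic vector is the bitstring `x`. -/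
def toSet {n : ℕ} (x : Fin n → Bool) : Finset (Fin n) := Finset.univ.filter (fun i => x i = true)

/-- `a(n,k)`: the bitstring of length `n` with `1`s exactly in the last `k` positions. -/
def abit (n k : ℕ) : Fin n → Bool := fun i => decide (n - k ≤ i.val)

/-- `b(n,k) = a(n-1,k)∘0`: the bitstring of length `n` with `1`s exactly in positions
`n-1-k, …, n-2`. -/
def bbit (n k : ℕ) : Fin n → Bool := fun i => decide (n - 1 - k ≤ i.val ∧ i.val < n - 1)

/-- `σ^ℓ`: cyclic left shift of a bitstring by `ℓ` positions. -/
def cycShift (n ℓ : ℕ) (x : Fin n → Bool) : Fin n → Bool :=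
  fun i => x ⟨(i.val + ℓ) % n, Nat.mod_lt _ (Nat.lt_of_le_of_lt (Nat.zero_le _) i.isLt)⟩

namespace Stmt16Aux

/-- membership-style mod lemma -/
lemma mod_eq_zero_iff {n x : ℕ} (h1 : 0 < x) (h2 : x < 2 * n) : x % n = 0 ↔ x = n := by
  constructor
  · intro h
    obtain ⟨k, hk⟩ := Nat.dvd_of_mod_eq_zero h
    rcases k with _ | _ | k
    · omega
    · simpa using hk
    · exfalso
      have hx : 2 * n ≤ x := by rw [hk]; nlinarith
      omega
  · rintro rfl; exact Nat.mod_self _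

lemma mod_cancel {n i c c' : ℕ} (h1 : (i + c) % n = 0) (h2 : (i + c') % n = 0) :
    c ≡ c' [MOD n] := by
  have h : i + c ≡ i + c' [MOD n] := by unfold Nat.ModEq; rw [h1, h2]
  exact Nat.ModEq.add_left_cancel' i h

def theIdx (n c : ℕ) (hn : 0 < n) : Fin n := ⟨(n - c % n) % n, Nat.mod_lt _ hn⟩

lemma theIdx_spec {n : ℕ} (hn : 0 < n) (c : ℕ) : ((theIdx n c hn).val + c) % n = 0 := by
  show ((n - c % n) % n + c) % n = 0
  have h1 : c % n < n := Nat.mod_lt _ hn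
  have hdm := Nat.div_add_mod c n
  have key : n - c % n + c = n + n * (c / n) := by omega
  rw [Nat.mod_add_mod, key, Nat.add_mul_mod_self_left, Nat.mod_self]

lemma eq_theIdx {n : ℕ} (hn : 0 < n) {c : ℕ} {i : Fin n} (h : (i.val + c) % n = 0) :
    i = theIdx n c hn := by
  have h' := mod_cancel (n := n) (i := c) (by rw [add_comm] at h; exact h)
      (by have := theIdx_spec hn c; rw [add_comm] at this; exact this)
  apply Fin.ext
  have := h'
  unfold Nat.ModEq at this
  rwa [Nat.mod_eq_of_lt i.isLt, Nat.mod_eq_of_lt (theIdx n c hn).isLt] at this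


lemma filter_single {n : ℕ} (hn : 0 < n) (c : ℕ) :
    (Finset.univ.filter fun i : Fin n => (i.val + c) % n = 0) = {theIdx n c hn} := by
  ext i
  simp only [Finset.mem_filter, Finset.mem_univ, true_and, Finset.mem_singleton]
  exact ⟨eq_theIdx hn, by rintro rfl; exact theIdx_spec hn c⟩

lemma not_both {n i c : ℕ} (hn : 2 ≤ n) (h1 : (i + c) % n = 0) : (i + (c + 1)) % n ≠ 0 := by
  intro h2
  have h := mod_cancel h1 h2
  have h' : 0 ≡ 1 [MOD n] := Nat.ModEq.add_left_cancel' c (by simpa using h)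
  have : (0 : ℕ) % n = 1 % n := h'
  rw [Nat.zero_mod, Nat.mod_eq_of_lt (by omega)] at this
  omega

lemma theIdx_ne {n : ℕ} (hn : 2 ≤ n) (c : ℕ) :
    theIdx n c (by omega) ≠ theIdx n (c + 1) (by omega) := by
  intro h
  have h1 := theIdx_spec (n := n) (by omega : 0 < n) c
  have h2 := theIdx_spec (n := n) (by omega : 0 < n) (c + 1)
  rw [← h] at h2
  exact not_both hn h1 h2

/-- the vertex sequence of the cycle -/
def fvert (n m : ℕ) : Fin n → Bool := fun i =>
  if m % 2 = 0 then decide ((i.val + (m / 2 + 1)) % n = 0)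
  else decide ((i.val + (m / 2 + 1)) % n = 0 ∨ (i.val + (m / 2 + 1 + 1)) % n = 0)

lemma fvert_even {n m : ℕ} (hm : m % 2 = 0) :
    fvert n m = fun i => decide ((i.val + (m / 2 + 1)) % n = 0) :=
  funext fun i => if_pos hm

lemma fvert_odd {n m : ℕ} (hm : m % 2 = 1) :
    fvert n m = fun i =>
      decide ((i.val + (m / 2 + 1)) % n = 0 ∨ (i.val + (m / 2 + 1 + 1)) % n = 0) :=
  funext fun i => if_neg (by omega)

lemma ham_singleton {n : ℕ} (hn : 0 < n) (x y : Fin n → Bool) (c : ℕ)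
    (h : ∀ i : Fin n, x i ≠ y i ↔ (i.val + c) % n = 0) : hammingDist x y = 1 := by
  have : (Finset.univ.filter fun i : Fin n => x i ≠ y i) = {theIdx n c hn} := by
    rw [← filter_single hn c]
    exact Finset.filter_congr fun i _ => by rw [h i]
  simp only [hammingDist, this, Finset.card_singleton]

lemma fvert_adj {n : ℕ} (hn : 4 ≤ n) (m : ℕ) :
    (hypercube n).Adj (fvert n m) (fvert n (m + 1)) := by
  have h0 : 0 < n := by omega
  show hammingDist _ _ = 1
  rcases Nat.mod_two_eq_zero_or_one m with hm | hm
  · have hm' : (m + 1) % 2 = 1 := by omega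
    have hd : (m + 1) / 2 = m / 2 := by omega
    rw [fvert_even hm, fvert_odd hm', hd]
    apply ham_singleton h0 _ _ (m / 2 + 1 + 1)
    intro i
    simp only [ne_eq, decide_eq_decide]
    have excl : ¬((i.val + (m / 2 + 1)) % n = 0 ∧ (i.val + (m / 2 + 1 + 1)) % n = 0) :=
      fun h => not_both (by omega) h.1 h.2
    tauto
  · have hm' : (m + 1) % 2 = 0 := by omega
    have hd : (m + 1) / 2 = m / 2 + 1 := by omega
    rw [fvert_odd hm, fvert_even hm', hd]
    apply ham_singleton h0 _ _ (m / 2 + 1)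
    intro i
    simp only [ne_eq, decide_eq_decide]
    have excl : ¬((i.val + (m / 2 + 1)) % n = 0 ∧ (i.val + (m / 2 + 1 + 1)) % n = 0) :=
      fun h => not_both (by omega) h.1 h.2
    tauto

lemma level_fvert {n : ℕ} (hn : 4 ≤ n) (m : ℕ) :
    level (fvert n m) = if m % 2 = 0 then 1 else 2 := by
  have h0 : 0 < n := by omega
  rcases Nat.mod_two_eq_zero_or_one m with hm | hm
  · rw [fvert_even hm, if_pos hm]
    unfold level
    simp only [decide_eq_true_eq]
    rw [filter_single h0, Finset.card_singleton]
  · rw [fvert_odd hm, if_neg (by omega)]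
    unfold level
    simp only [decide_eq_true_eq]
    rw [Finset.filter_or, filter_single h0, filter_single h0,
      Finset.card_union_of_disjoint (by
        simp only [Finset.disjoint_singleton]
        exact theIdx_ne (by omega) _)]
    simp

lemma modeq_eq {n l l' : ℕ} (hl : l < n) (hl' : l' < n) (h : l ≡ l' [MOD n]) : l = l' := by
  have : l % n = l' % n := h
  rwa [Nat.mod_eq_of_lt hl, Nat.mod_eq_of_lt hl'] at this

lemma fvert_inj {n : ℕ} (hn : 4 ≤ n) {m m' : ℕ} (hm : m < 2 * n) (hm' : m' < 2 * n)
    (h : fvert n m = fvert n m') : m = m' := by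
  have h0 : 0 < n := by omega
  have hpar : m % 2 = m' % 2 := by
    have hl := congrArg level h
    rw [level_fvert hn, level_fvert hn] at hl
    rcases Nat.mod_two_eq_zero_or_one m with h1 | h1 <;>
      rcases Nat.mod_two_eq_zero_or_one m' with h2 | h2 <;>
        simp [h1, h2] at hl ⊢ <;> omega
  have hdiv : m / 2 < n := by omega
  have hdiv' : m' / 2 < n := by omega
  suffices hs : m / 2 = m' / 2 by omega
  rcases Nat.mod_two_eq_zero_or_one m with h1 | h1
  · have h2 : m' % 2 = 0 := by omega
    rw [fvert_even h1, fvert_even h2] at h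
    have e1 := congrFun h (theIdx n (m / 2 + 1) h0)
    simp only [decide_eq_decide] at e1
    have s1 := theIdx_spec h0 (m / 2 + 1)
    have hmod := mod_cancel s1 (e1.mp s1)
    exact modeq_eq hdiv hdiv' (Nat.ModEq.add_right_cancel' 1 hmod)
  · have h2 : m' % 2 = 1 := by omega
    rw [fvert_odd h1, fvert_odd h2] at h
    have e1 := congrFun h (theIdx n (m / 2 + 1) h0)
    have e2 := congrFun h (theIdx n (m / 2 + 1 + 1) h0)
    simp only [decide_eq_decide] at e1 e2
    have s1 := theIdx_spec h0 (m / 2 + 1)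
    have s2 := theIdx_spec h0 (m / 2 + 1 + 1)
    rcases e1.mp (Or.inl s1) with hA | hA
    · exact modeq_eq hdiv hdiv'
        (Nat.ModEq.add_right_cancel' 1 (mod_cancel s1 hA))
    · rcases e2.mp (Or.inr s2) with hB | hB
      · exfalso
        have hA' : m / 2 + 1 ≡ m' / 2 + 1 + 1 [MOD n] := mod_cancel s1 hA
        have hB' : m / 2 + 1 + 1 ≡ m' / 2 + 1 [MOD n] := mod_cancel s2 hB
        have hc := hA'.add hB'.symm
        have hc' : (m / 2 + m' / 2 + 2) + 0 ≡ (m / 2 + m' / 2 + 2) + 2 [MOD n] := by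
          have e : m / 2 + 1 + (m' / 2 + 1) = m / 2 + m' / 2 + 2 + 0 := by omega
          have e' : m' / 2 + 1 + 1 + (m / 2 + 1 + 1) = m / 2 + m' / 2 + 2 + 2 := by omega
          rwa [e, e'] at hc
        have h02 : (0 : ℕ) ≡ 2 [MOD n] := Nat.ModEq.add_left_cancel' _ hc'
        have : (0 : ℕ) % n = 2 % n := h02
        rw [Nat.zero_mod, Nat.mod_eq_of_lt (by omega)] at this
        omega
      · exact modeq_eq hdiv hdiv'
          (Nat.ModEq.add_right_cancel' 1
            (Nat.ModEq.add_right_cancel' 1 (mod_cancel s2 hB)))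


lemma fvert_two_n {n : ℕ} (hn : 4 ≤ n) : fvert n (2 * n) = fvert n 0 := by
  rw [fvert_even (by omega), fvert_even (by omega)]
  funext i
  rw [decide_eq_decide]
  rw [show 2 * n / 2 = n from by omega, show 0 / 2 = 0 from rfl]
  rw [show i.val + (n + 1) = i.val + (0 + 1) + n from by omega, Nat.add_mod_right]

lemma fvert_zero {n : ℕ} (hn : 4 ≤ n) : fvert n 0 = abit n 1 := by
  rw [fvert_even (by omega)]
  funext i
  unfold abit
  rw [decide_eq_decide]
  have hi := i.isLt
  rw [show (0:ℕ) / 2 = 0 from rfl]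
  rw [mod_eq_zero_iff (by omega) (by omega)]
  omega

lemma cycShift_a1 {n : ℕ} (hn : 4 ≤ n) (l : ℕ) :
    cycShift n l (abit n 1) = fvert n (2 * l) := by
  rw [fvert_even (by omega)]
  funext i
  show decide (n - 1 ≤ (i.val + l) % n) = _
  rw [decide_eq_decide, show 2 * l / 2 = l from by omega]
  have hrn : (i.val + l) % n < n := Nat.mod_lt _ (by omega)
  have h1 : (i.val + (l + 1)) % n = ((i.val + l) % n + 1) % n := by
    rw [show i.val + (l + 1) = i.val + l + 1 from by omega, Nat.add_mod,
      Nat.mod_eq_of_lt (show (1:ℕ) < n by omega)]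
  rw [h1, mod_eq_zero_iff (by omega) (by omega)]
  omega

lemma cycShift_a2 {n : ℕ} (hn : 4 ≤ n) (l : ℕ) :
    cycShift n l (abit n 2) = fvert n (2 * l + 1) := by
  rw [fvert_odd (by omega)]
  funext i
  show decide (n - 2 ≤ (i.val + l) % n) = _
  rw [decide_eq_decide, show (2 * l + 1) / 2 = l from by omega]
  have hrn : (i.val + l) % n < n := Nat.mod_lt _ (by omega)
  have h1 : (i.val + (l + 1)) % n = ((i.val + l) % n + 1) % n := by
    rw [show i.val + (l + 1) = i.val + l + 1 from by omega, Nat.add_mod,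
      Nat.mod_eq_of_lt (show (1:ℕ) < n by omega)]
  have h2 : (i.val + (l + 1 + 1)) % n = ((i.val + l) % n + 2) % n := by
    rw [show i.val + (l + 1 + 1) = i.val + l + 2 from by omega, Nat.add_mod,
      Nat.mod_eq_of_lt (show (2:ℕ) < n by omega)]
  rw [h1, h2, mod_eq_zero_iff (by omega) (by omega),
    mod_eq_zero_iff (by omega) (by omega)]
  omega

/-- the walk through `fvert n 0, fvert n 1, …, fvert n k` -/
def walkTo (n : ℕ) (hn : 4 ≤ n) : (k : ℕ) → (hypercube n).Walk (fvert n 0) (fvert n k)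
  | 0 => SimpleGraph.Walk.nil
  | k + 1 => (walkTo n hn k).concat (fvert_adj hn k)

lemma walkTo_length {n : ℕ} (hn : 4 ≤ n) (k : ℕ) : (walkTo n hn k).length = k := by
  induction k with
  | zero => rfl
  | succ k ih => rw [walkTo, SimpleGraph.Walk.length_concat, ih]

lemma walkTo_support {n : ℕ} (hn : 4 ≤ n) (k : ℕ) :
    (walkTo n hn k).support = (List.range (k + 1)).map (fvert n) := by
  induction k with
  | zero => rfl
  | succ k ih =>
    rw [walkTo, SimpleGraph.Walk.support_concat, ih, List.range_succ (n := k + 1)]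
    simp

lemma walkTo_edges {n : ℕ} (hn : 4 ≤ n) (k : ℕ) :
    (walkTo n hn k).edges =
      (List.range k).map (fun m => s(fvert n m, fvert n (m + 1))) := by
  induction k with
  | zero => rfl
  | succ k ih =>
    rw [walkTo, SimpleGraph.Walk.edges_concat, ih, List.range_succ (n := k)]
    simp


lemma fvert_inj' {n : ℕ} (hn : 4 ≤ n) {m m' : ℕ} (hm : m ≤ 2 * n) (hm' : m' ≤ 2 * n)
    (h : fvert n m = fvert n m') :
    m = m' ∨ (m = 0 ∧ m' = 2 * n) ∨ (m = 2 * n ∧ m' = 0) := by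
  rcases eq_or_lt_of_le hm with rfl | hm1
  · rcases eq_or_lt_of_le hm' with rfl | hm'1
    · left; rfl
    · rw [fvert_two_n hn] at h
      have := fvert_inj hn (by omega) hm'1 h
      omega
  · rcases eq_or_lt_of_le hm' with rfl | hm'1
    · rw [fvert_two_n hn] at h
      have := fvert_inj hn hm1 (by omega) h
      omega
    · left; exact fvert_inj hn hm1 hm'1 h

end Stmt16Aux

open Stmt16Aux

/-- In `Q(n)` with `n ≥ 4`, the union of the cyclic shifts `σ^ℓ(D(n,1))`,
`ℓ = 0,…,n-1`, where `D(n,1) = (a(n,1), a(n,2), b(n,1))`, forms a cycle of length `2n`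
within levels `1` and `2` that visits all `n` vertices in level `1`. -/
theorem stmt_16 (n : ℕ) (hn : 4 ≤ n) :
    ∃ c : (hypercube n).Walk (abit n 1) (abit n 1), c.IsCycle ∧ c.length = 2 * n ∧
      (∀ v ∈ c.support, level v = 1 ∨ level v = 2) ∧
      (∀ v : Fin n → Bool, level v = 1 → v ∈ c.support) ∧
      (∀ v : Fin n → Bool, v ∈ c.support ↔
        ∃ ℓ < n, v = cycShift n ℓ (abit n 1) ∨ v = cycShift n ℓ (abit n 2)) := by
  have h0 : 0 < n := by omega
  have e0 : fvert n 0 = abit n 1 := fvert_zero hn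
  have e1 : fvert n (2 * n) = abit n 1 := by rw [fvert_two_n hn, e0]
  set p := walkTo n hn (2 * n) with hp
  refine ⟨p.copy e0 e1, ?_, ?_, ?_, ?_, ?_⟩
  · -- IsCycle
    have hsup : (p.copy e0 e1).support = (List.range (2 * n + 1)).map (fvert n) := by
      rw [SimpleGraph.Walk.support_copy, walkTo_support]
    have hedges : (p.copy e0 e1).edges =
        (List.range (2 * n)).map (fun m => s(fvert n m, fvert n (m + 1))) := by
      rw [SimpleGraph.Walk.edges_copy, walkTo_edges]
    refine ⟨⟨⟨?_⟩, ?_⟩, ?_⟩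
    · -- edges nodup
      rw [hedges]
      refine List.Nodup.map_on ?_ List.nodup_range
      intro m hm m' hm' heq
      rw [List.mem_range] at hm hm'
      rw [Sym2.eq_iff] at heq
      rcases heq with ⟨ha, hb⟩ | ⟨ha, hb⟩
      · exact fvert_inj hn hm hm' ha
      · have H1 := fvert_inj' hn (by omega) (by omega) ha
        have H2 := fvert_inj' hn (by omega) (by omega) hb
        omega
    · -- ne nil
      intro hnil
      have := congrArg SimpleGraph.Walk.length hnil
      rw [SimpleGraph.Walk.length_copy, walkTo_length, SimpleGraph.Walk.length_nil] at this
      omega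
    · -- support tail nodup
      have htail : (p.copy e0 e1).support.tail =
          (List.range (2 * n)).map (fun m => fvert n (m + 1)) := by
        rw [hsup, List.range_succ_eq_map]
        simp [List.map_map, Function.comp_def]
      rw [htail]
      refine List.Nodup.map_on ?_ List.nodup_range
      intro m hm m' hm' heq
      rw [List.mem_range] at hm hm'
      have := fvert_inj' hn (by omega) (by omega) heq
      omega
  · rw [SimpleGraph.Walk.length_copy, walkTo_length]
  · -- levels
    intro v hv
    rw [SimpleGraph.Walk.support_copy, walkTo_support] at hv
    rw [List.mem_map] at hv
    obtain ⟨m, _, rfl⟩ := hv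
    rcases Nat.mod_two_eq_zero_or_one m with h | h
    · left; rw [level_fvert hn, if_pos h]
    · right; rw [level_fvert hn, if_neg (by omega)]
  · -- all level-1 vertices
    intro v hv
    unfold level at hv
    obtain ⟨j, hj⟩ := Finset.card_eq_one.mp hv
    have hvj : ∀ i : Fin n, v i = true ↔ i = j := by
      intro i
      simpa using Finset.ext_iff.mp hj i
    have hj' := j.isLt
    have hveq : v = fvert n (2 * (n - 1 - j.val)) := by
      funext i
      have hi := i.isLt
      rw [fvert_even (by omega), show 2 * (n - 1 - j.val) / 2 = n - 1 - j.val from by omega]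
      show v i = decide ((i.val + (n - 1 - j.val + 1)) % n = 0)
      rw [show i.val + (n - 1 - j.val + 1) = i.val + (n - j.val) from by omega]
      have hiff : (i.val + (n - j.val)) % n = 0 ↔ i = j := by
        rw [mod_eq_zero_iff (by omega) (by omega)]
        constructor
        · intro h; exact Fin.ext (by omega)
        · rintro rfl; omega
      by_cases hij : i = j
      · rw [(hvj i).mpr hij]
        simp [hiff, hij]
      · have hne : v i = false := by
          rcases Bool.eq_false_or_eq_true (v i) with h | h
          · exact absurd ((hvj i).mp h) hij
          · exact h
        rw [hne]
        simp [hiff, hij]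
    rw [hveq, SimpleGraph.Walk.support_copy, walkTo_support, List.mem_map]
    exact ⟨2 * (n - 1 - j.val), by rw [List.mem_range]; omega, rfl⟩
  · -- characterization via cyclic shifts
    intro v
    rw [SimpleGraph.Walk.support_copy, walkTo_support, List.mem_map]
    constructor
    · rintro ⟨m, hm, rfl⟩
      rw [List.mem_range] at hm
      rcases eq_or_lt_of_le (show m ≤ 2 * n by omega) with rfl | hlt
      · refine ⟨0, by omega, Or.inl ?_⟩
        rw [fvert_two_n hn, cycShift_a1 hn 0]
      · refine ⟨m / 2, by omega, ?_⟩
        rcases Nat.mod_two_eq_zero_or_one m with hpar | hpar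
        · left; rw [cycShift_a1 hn, show 2 * (m / 2) = m from by omega]
        · right; rw [cycShift_a2 hn, show 2 * (m / 2) + 1 = m from by omega]
    · rintro ⟨l, hl, rfl | rfl⟩
      · exact ⟨2 * l, by rw [List.mem_range]; omega, (cycShift_a1 hn l).symm⟩
      · exact ⟨2 * l + 1, by rw [List.mem_range]; omega, (cycShift_a2 hn l).symm⟩
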